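/- Let Γ be a weighted zero-sum network polymatrix game. Then for any exploration rates T_k > 0, Γ has a unique Quantal Response Equilibrium x̄, which is globally asymptotically stable under the smooth Q-Learning dynamics: every interior solution converges to x̄. -/

import Mathlib

/-
STATEMENT 5: Let Γ be a weighted zero-sum network polymatrix game. Then for any
exploration rates T_k > 0, Γ has a unique QRE x̄, which is globally
asymptotically stable under the smooth Q-Learning dynamics: every interior
solution converges to x̄.
-/

open Filter Topology

noncomputable section

/-- Joint strategy space. -/
abbrev Strat {N : ℕ} (n : Fin N → ℕ) := ∀ k, Fin (n k) → ℝ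

/-- `x` lies in `Δ = Δ₁ × ⋯ × Δ_N`. -/
def JointSimplex {N : ℕ} {n : Fin N → ℕ} (x : Strat n) : Prop :=
  ∀ k, x k ∈ stdSimplex ℝ (Fin (n k))

/-- `x` lies in the interior of `Δ`. -/
def JointInterior {N : ℕ} {n : Fin N → ℕ} (x : Strat n) : Prop :=
  ∀ k, (∀ i, 0 < x k i) ∧ ∑ i, x k i = 1

/-- Reward vector of player `k` in the network polymatrix game with edge set `E`
and payoff matrices `A`: `r_k(x) = Σ_{(k,l)∈E} A^{kl} x_l`. -/
def polyReward {N : ℕ} {n : Fin N → ℕ} (E : Finset (Fin N × Fin N))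
    (A : ∀ k l, Matrix (Fin (n k)) (Fin (n l)) ℝ) : Strat n → Strat n :=
  fun x k i => ∑ l ∈ Finset.univ.filter (fun l => (k, l) ∈ E), ∑ j, A k l i j * x l j

/-- Quantal Response Equilibrium. -/
def IsQRE {N : ℕ} {n : Fin N → ℕ} (r : Strat n → Strat n) (T : Fin N → ℝ) (x : Strat n) : Prop :=
  JointSimplex x ∧
    ∀ k i, x k i = Real.exp (r x k i / T k) / ∑ j, Real.exp (r x k j / T k)

/-- An interior solution of the smooth Q-Learning dynamics. -/
def QLSolution {N : ℕ} {n : Fin N → ℕ} (r : Strat n → Strat n) (T : Fin N → ℝ)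
    (x : ℝ → Strat n) : Prop :=
  (∀ t, JointInterior (x t)) ∧
    ∀ t k i, HasDerivAt (fun s => x s k i)
      (x t k i * (r (x t) k i - (∑ j, x t k j * r (x t) k j)
        - T k * (Real.log (x t k i) - ∑ j, x t k j * Real.log (x t k j)))) t





namespace QLAux

/-- Pointwise Gibbs inequality term. -/
lemma klterm_le {p q : ℝ} (hp : 0 ≤ p) (hq : 0 < q) :
    p - q ≤ p * (Real.log p - Real.log q) := by
  rcases eq_or_lt_of_le hp with h | h
  · simp [← h, hq.le]
  · have hlog : Real.log (q / p) ≤ q / p - 1 := Real.log_le_sub_one_of_pos (by positivity)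
    have hdiv : Real.log (q / p) = Real.log q - Real.log p := Real.log_div hq.ne' h.ne'
    have := mul_le_mul_of_nonneg_left hlog hp
    rw [hdiv] at this
    have h2 : p * (q / p - 1) = q - p := by field_simp
    nlinarith [this]

lemma klterm_eq {p q : ℝ} (hp : 0 ≤ p) (hq : 0 < q)
    (h : p * (Real.log p - Real.log q) = p - q) : p = q := by
  rcases eq_or_lt_of_le hp with h0 | h0
  · exfalso; rw [← h0] at h; simp at h; linarith
  · by_contra hne
    have hne' : q / p ≠ 1 := by
      intro hc
      exact hne (by field_simp at hc; linarith)
    have hlog : Real.log (q / p) < q / p - 1 :=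
      Real.log_lt_sub_one_of_pos (by positivity) hne'
    have hdiv : Real.log (q / p) = Real.log q - Real.log p := Real.log_div hq.ne' h0.ne'
    have := mul_lt_mul_of_pos_left hlog h0
    rw [hdiv] at this
    have h2 : p * (q / p - 1) = q - p := by field_simp
    nlinarith [this]

lemma kl_nonneg {m : ℕ} {p q : Fin m → ℝ} (hp : ∀ i, 0 ≤ p i) (hq : ∀ i, 0 < q i)
    (hps : ∑ i, p i = 1) (hqs : ∑ i, q i = 1) :
    0 ≤ ∑ i, p i * (Real.log (p i) - Real.log (q i)) := by
  have h : ∑ i, (p i - q i) ≤ ∑ i, p i * (Real.log (p i) - Real.log (q i)) :=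
    Finset.sum_le_sum fun i _ => klterm_le (hp i) (hq i)
  rw [Finset.sum_sub_distrib, hps, hqs] at h
  simpa using h

lemma kl_eq_zero {m : ℕ} {p q : Fin m → ℝ} (hp : ∀ i, 0 ≤ p i) (hq : ∀ i, 0 < q i)
    (hps : ∑ i, p i = 1) (hqs : ∑ i, q i = 1)
    (h : ∑ i, p i * (Real.log (p i) - Real.log (q i)) = 0) : p = q := by
  have key : ∀ i ∈ Finset.univ,
      p i * (Real.log (p i) - Real.log (q i)) - (p i - q i) = 0 := by
    have hsum : ∑ i, (p i * (Real.log (p i) - Real.log (q i)) - (p i - q i)) = 0 := by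
      rw [Finset.sum_sub_distrib, h, Finset.sum_sub_distrib, hps, hqs]; ring
    refine (Finset.sum_eq_zero_iff_of_nonneg ?_).mp hsum
    intro i _
    have := klterm_le (hp i) (hq i)
    linarith
  funext i
  have hi := key i (Finset.mem_univ i)
  exact klterm_eq (hp i) (hq i) (by linarith)

/-- Segment inequality expressing convexity of `x ↦ x * log x` on `[0, ∞)`. -/
lemma mul_log_segment {a b t : ℝ} (ha : 0 ≤ a) (hb : 0 ≤ b) (ht0 : 0 ≤ t) (ht1 : t ≤ 1) :
    ((1 - t) * a + t * b) * Real.log ((1 - t) * a + t * b)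
      ≤ (1 - t) * (a * Real.log a) + t * (b * Real.log b) := by
  have h := Real.convexOn_mul_log.2 (Set.mem_Ici.2 ha) (Set.mem_Ici.2 hb)
    (by linarith : (0:ℝ) ≤ 1 - t) ht0 (by ring)
  simpa [smul_eq_mul] using h

end QLAux

namespace QLAux2

variable {m : ℕ} (c : Fin m → ℝ) (T : ℝ)

lemma softmax_pos (hT : 0 < T) [NeZero m] (i : Fin m) :
    0 < Real.exp (c i / T) / ∑ j, Real.exp (c j / T) := by
  have hS : 0 < ∑ j, Real.exp (c j / T) :=
    Finset.sum_pos (fun j _ => Real.exp_pos _) ⟨⟨0, Nat.pos_of_ne_zero (NeZero.ne m)⟩, Finset.mem_univ _⟩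
  positivity

lemma softmax_sum (hm : 0 < m) :
    ∑ i, Real.exp (c i / T) / ∑ j, Real.exp (c j / T) = 1 := by
  have hS : 0 < ∑ j, Real.exp (c j / T) :=
    Finset.sum_pos (fun j _ => Real.exp_pos _) ⟨⟨0, hm⟩, Finset.mem_univ _⟩
  rw [← Finset.sum_div, div_self hS.ne']

lemma softmax_log (hm : 0 < m) (i : Fin m) :
    Real.log (Real.exp (c i / T) / ∑ j, Real.exp (c j / T))
      = c i / T - Real.log (∑ j, Real.exp (c j / T)) := by
  have hS : 0 < ∑ j, Real.exp (c j / T) :=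
    Finset.sum_pos (fun j _ => Real.exp_pos _) ⟨⟨0, hm⟩, Finset.mem_univ _⟩
  rw [Real.log_div (Real.exp_ne_zero _) hS.ne', Real.log_exp]

/-- The key Gibbs identity. -/
lemma gibbs_identity (hT : 0 < T) (hm : 0 < m) {p : Fin m → ℝ} (hps : ∑ i, p i = 1) :
    T * Real.log (∑ j, Real.exp (c j / T))
        - (∑ i, p i * c i - T * ∑ i, p i * Real.log (p i))
      = T * ∑ i, p i * (Real.log (p i)
          - Real.log (Real.exp (c i / T) / ∑ j, Real.exp (c j / T))) := by
  set S := ∑ j, Real.exp (c j / T) with hSdef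
  have hlog : ∀ i, Real.log (Real.exp (c i / T) / S) = c i / T - Real.log S :=
    softmax_log c T hm
  have : ∑ i, p i * (Real.log (p i) - Real.log (Real.exp (c i / T) / S))
      = ∑ i, (p i * Real.log (p i) - p i * c i / T + p i * Real.log S) := by
    refine Finset.sum_congr rfl fun i _ => ?_
    rw [hlog i]; ring
  rw [this]
  have hexp : ∑ i, (p i * Real.log (p i) - p i * c i / T + p i * Real.log S)
      = (∑ i, p i * Real.log (p i)) - (∑ i, p i * c i) / T + Real.log S := by
    rw [Finset.sum_add_distrib, Finset.sum_sub_distrib, ← Finset.sum_div,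
      ← Finset.sum_mul, hps, one_mul]
  rw [hexp]
  field_simp
  ring

lemma gibbs_le (hT : 0 < T) (hm : 0 < m) {p : Fin m → ℝ}
    (hp : ∀ i, 0 ≤ p i) (hps : ∑ i, p i = 1) :
    ∑ i, p i * c i - T * ∑ i, p i * Real.log (p i)
      ≤ T * Real.log (∑ j, Real.exp (c j / T)) := by
  have hid := gibbs_identity c T hT hm hps
  have hkl := QLAux.kl_nonneg (q := fun i => Real.exp (c i / T) / ∑ j, Real.exp (c j / T))
    hp (fun i => @softmax_pos m c T hT ⟨hm.ne'⟩ i) hps (softmax_sum c T hm)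
  nlinarith [hkl, hid]

lemma gibbs_eq_case (hT : 0 < T) (hm : 0 < m) {p : Fin m → ℝ}
    (hp : ∀ i, 0 ≤ p i) (hps : ∑ i, p i = 1)
    (heq : ∑ i, p i * c i - T * ∑ i, p i * Real.log (p i)
      = T * Real.log (∑ j, Real.exp (c j / T))) :
    p = fun i => Real.exp (c i / T) / ∑ j, Real.exp (c j / T) := by
  have hid := gibbs_identity c T hT hm hps
  rw [heq] at hid
  have hkl0 : ∑ i, p i * (Real.log (p i)
      - Real.log (Real.exp (c i / T) / ∑ j, Real.exp (c j / T))) = 0 := by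
    have h2 : T * (∑ i, p i * (Real.log (p i)
        - Real.log (Real.exp (c i / T) / ∑ j, Real.exp (c j / T)))) = 0 := by
      linarith [hid]
    exact (mul_eq_zero.mp h2).resolve_left hT.ne'
  exact QLAux.kl_eq_zero hp (fun i => @softmax_pos m c T hT ⟨hm.ne'⟩ i) hps
    (softmax_sum c T hm) hkl0

lemma gibbs_attain (hT : 0 < T) (hm : 0 < m) :
    (∑ i, (Real.exp (c i / T) / ∑ j, Real.exp (c j / T)) * c i)
        - T * ∑ i, (Real.exp (c i / T) / ∑ j, Real.exp (c j / T))
            * Real.log (Real.exp (c i / T) / ∑ j, Real.exp (c j / T))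
      = T * Real.log (∑ j, Real.exp (c j / T)) := by
  have hid := gibbs_identity c T hT hm (softmax_sum c T hm)
  simp only [sub_self, mul_zero, Finset.sum_const_zero] at hid
  linarith [hid]

end QLAux2

namespace QLGame

variable {N : ℕ} {n : Fin N → ℕ}

lemma jointSimplex_iff {x : Strat n} :
    JointSimplex x ↔ ∀ k, (∀ i, 0 ≤ x k i) ∧ ∑ i, x k i = 1 := Iff.rfl

lemma polyReward_comb (E : Finset (Fin N × Fin N))
    (A : ∀ k l, Matrix (Fin (n k)) (Fin (n l)) ℝ) (a b : ℝ) (x y : Strat n) (k i) :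
    polyReward E A (fun l j => a * x l j + b * y l j) k i
      = a * polyReward E A x k i + b * polyReward E A y k i := by
  simp only [polyReward, Finset.mul_sum]
  rw [← Finset.sum_add_distrib]
  refine Finset.sum_congr rfl fun l _ => ?_
  rw [← Finset.sum_add_distrib]
  exact Finset.sum_congr rfl fun j _ => by ring

lemma continuous_polyReward (E : Finset (Fin N × Fin N))
    (A : ∀ k l, Matrix (Fin (n k)) (Fin (n l)) ℝ) (k i) :
    Continuous fun x : Strat n => polyReward E A x k i := by
  refine continuous_finset_sum _ fun l _ => continuous_finset_sum _ fun j _ => ?_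
  exact continuous_const.mul ((continuous_apply j).comp (continuous_apply l))

/-- The weighted bilinear pairing. -/
def Bform (w : Fin N → ℝ) (E : Finset (Fin N × Fin N))
    (A : ∀ k l, Matrix (Fin (n k)) (Fin (n l)) ℝ) (x y : Strat n) : ℝ :=
  ∑ k, w k * ∑ i, x k i * polyReward E A y k i

lemma Bform_antisymm {E : Finset (Fin N × Fin N)}
    {A : ∀ k l, Matrix (Fin (n k)) (Fin (n l)) ℝ} {w : Fin N → ℝ}
    (hzs : ∀ x : Strat n, JointSimplex x →
      ∑ k, w k * ∑ i, x k i * polyReward E A x k i = 0)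
    {x y : Strat n} (hx : JointSimplex x) (hy : JointSimplex y) :
    Bform w E A x y + Bform w E A y x = 0 := by
  set mpt : Strat n := fun l j => (1/2 : ℝ) * x l j + (1/2 : ℝ) * y l j with hmdef
  have hmS : JointSimplex mpt := by
    intro k
    refine ⟨fun i => ?_, ?_⟩
    · have h1 := (hx k).1 i
      have h2 := (hy k).1 i
      simp only [hmdef]
      nlinarith
    · have h1 := (hx k).2
      have h2 := (hy k).2
      simp only [hmdef]
      rw [Finset.sum_add_distrib, ← Finset.mul_sum, ← Finset.mul_sum, h1, h2]
      norm_num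
  have hrm : ∀ k i, polyReward E A mpt k i
      = (1/2 : ℝ) * polyReward E A x k i + (1/2 : ℝ) * polyReward E A y k i :=
    fun k i => polyReward_comb E A _ _ x y k i
  have hexp : ∀ k, ∑ i, mpt k i * polyReward E A mpt k i
      = (1/4 : ℝ) * (∑ i, x k i * polyReward E A x k i)
        + (1/4 : ℝ) * (∑ i, x k i * polyReward E A y k i)
        + (1/4 : ℝ) * (∑ i, y k i * polyReward E A x k i)
        + (1/4 : ℝ) * (∑ i, y k i * polyReward E A y k i) := by
    intro k
    have : ∀ i, mpt k i * polyReward E A mpt k i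
        = (1/4 : ℝ) * (x k i * polyReward E A x k i)
          + (1/4 : ℝ) * (x k i * polyReward E A y k i)
          + (1/4 : ℝ) * (y k i * polyReward E A x k i)
          + (1/4 : ℝ) * (y k i * polyReward E A y k i) := by
      intro i
      rw [hrm k i]
      simp only [hmdef]
      ring
    rw [Finset.sum_congr rfl fun i _ => this i]
    rw [Finset.sum_add_distrib, Finset.sum_add_distrib, Finset.sum_add_distrib,
      ← Finset.mul_sum, ← Finset.mul_sum, ← Finset.mul_sum, ← Finset.mul_sum]
  have h0 := hzs mpt hmS
  have hx0 := hzs x hx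
  have hy0 := hzs y hy
  have h4 : ∑ k, w k * ∑ i, mpt k i * polyReward E A mpt k i
      = (1/4 : ℝ) * (∑ k, w k * ∑ i, x k i * polyReward E A x k i)
        + (1/4 : ℝ) * Bform w E A x y + (1/4 : ℝ) * Bform w E A y x
        + (1/4 : ℝ) * (∑ k, w k * ∑ i, y k i * polyReward E A y k i) := by
    unfold Bform
    rw [Finset.sum_congr rfl fun k _ => by rw [hexp k]]
    rw [Finset.sum_congr rfl (fun k _ => by ring :
      ∀ k ∈ Finset.univ, w k * ((1/4 : ℝ) * (∑ i, x k i * polyReward E A x k i)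
        + (1/4 : ℝ) * (∑ i, x k i * polyReward E A y k i)
        + (1/4 : ℝ) * (∑ i, y k i * polyReward E A x k i)
        + (1/4 : ℝ) * (∑ i, y k i * polyReward E A y k i))
      = (1/4 : ℝ) * (w k * ∑ i, x k i * polyReward E A x k i)
        + (1/4 : ℝ) * (w k * ∑ i, x k i * polyReward E A y k i)
        + (1/4 : ℝ) * (w k * ∑ i, y k i * polyReward E A x k i)
        + (1/4 : ℝ) * (w k * ∑ i, y k i * polyReward E A y k i))]
    rw [Finset.sum_add_distrib, Finset.sum_add_distrib, Finset.sum_add_distrib,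
      ← Finset.mul_sum, ← Finset.mul_sum, ← Finset.mul_sum, ← Finset.mul_sum]
  rw [h0, hx0, hy0] at h4
  unfold Bform at h4 ⊢
  linarith [h4]

lemma qre_facts {E : Finset (Fin N × Fin N)} {A : ∀ k l, Matrix (Fin (n k)) (Fin (n l)) ℝ}
    {T : Fin N → ℝ} (hn : ∀ k, 0 < n k) (hT : ∀ k, 0 < T k)
    {xb : Strat n} (hq : IsQRE (polyReward E A) T xb) :
    ∀ k, (∀ i, 0 < xb k i) ∧ (∑ i, xb k i = 1) ∧
      ∀ i, polyReward E A xb k i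
        = T k * (Real.log (xb k i) + Real.log (∑ j, Real.exp (polyReward E A xb k j / T k))) := by
  intro k
  have hS : 0 < ∑ j, Real.exp (polyReward E A xb k j / T k) :=
    Finset.sum_pos (fun j _ => Real.exp_pos _) ⟨⟨0, hn k⟩, Finset.mem_univ _⟩
  have hpos : ∀ i, 0 < xb k i := fun i => by
    rw [hq.2 k i]; positivity
  refine ⟨hpos, (hq.1 k).2, fun i => ?_⟩
  have hlog : Real.log (xb k i) = polyReward E A xb k i / T k
      - Real.log (∑ j, Real.exp (polyReward E A xb k j / T k)) := by
    rw [hq.2 k i, Real.log_div (Real.exp_ne_zero _) hS.ne', Real.log_exp]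
  rw [hlog]
  rw [mul_add, mul_sub, mul_div_cancel₀ _ (hT k).ne']
  ring

lemma lyap_identity {E : Finset (Fin N × Fin N)}
    {A : ∀ k l, Matrix (Fin (n k)) (Fin (n l)) ℝ} {w T : Fin N → ℝ}
    (hn : ∀ k, 0 < n k) (hT : ∀ k, 0 < T k)
    (hzs : ∀ x : Strat n, JointSimplex x →
      ∑ k, w k * ∑ i, x k i * polyReward E A x k i = 0)
    {xb : Strat n} (hq : IsQRE (polyReward E A) T xb)
    {y : Strat n} (hy : JointInterior y) :
    ∑ k, w k * ∑ i, xb k i * (polyReward E A y k i - (∑ j, y k j * polyReward E A y k j)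
        - T k * (Real.log (y k i) - ∑ j, y k j * Real.log (y k j)))
      = ∑ k, w k * T k *
          ((∑ i, xb k i * (Real.log (xb k i) - Real.log (y k i)))
            + (∑ i, y k i * (Real.log (y k i) - Real.log (xb k i)))) := by
  have hyS : JointSimplex y := fun k => ⟨fun i => ((hy k).1 i).le, (hy k).2⟩
  have hfacts := qre_facts hn hT hq
  have claim1 : ∀ k, ∑ i, xb k i * (polyReward E A y k i
        - (∑ j, y k j * polyReward E A y k j)
        - T k * (Real.log (y k i) - ∑ j, y k j * Real.log (y k j)))
      = (∑ i, xb k i * polyReward E A y k i) - (∑ j, y k j * polyReward E A y k j)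
        - T k * (∑ i, xb k i * Real.log (y k i))
        + T k * (∑ j, y k j * Real.log (y k j)) := by
    intro k
    have hsum1 : ∑ i, xb k i = 1 := (hq.1 k).2
    trans (∑ i, (xb k i * polyReward E A y k i
        - xb k i * (∑ j, y k j * polyReward E A y k j)
        - T k * (xb k i * Real.log (y k i))
        + xb k i * (T k * (∑ j, y k j * Real.log (y k j)))))
    · exact Finset.sum_congr rfl fun i _ => by ring
    · rw [Finset.sum_add_distrib, Finset.sum_sub_distrib, Finset.sum_sub_distrib,
        ← Finset.sum_mul, ← Finset.mul_sum, ← Finset.sum_mul, hsum1, one_mul, one_mul]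
  have claim2 : ∀ k, ∑ i, y k i * polyReward E A xb k i
      = T k * (∑ i, y k i * Real.log (xb k i))
        + T k * Real.log (∑ j, Real.exp (polyReward E A xb k j / T k)) := by
    intro k
    have hsum1 : ∑ i, y k i = 1 := (hy k).2
    trans (∑ i, (T k * (y k i * Real.log (xb k i))
        + (T k * Real.log (∑ j, Real.exp (polyReward E A xb k j / T k))) * y k i))
    · exact Finset.sum_congr rfl fun i _ => by rw [(hfacts k).2.2 i]; ring
    · rw [Finset.sum_add_distrib, ← Finset.mul_sum, ← Finset.mul_sum, hsum1, mul_one]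
  have claim3 : ∀ k, ∑ i, xb k i * polyReward E A xb k i
      = T k * (∑ i, xb k i * Real.log (xb k i))
        + T k * Real.log (∑ j, Real.exp (polyReward E A xb k j / T k)) := by
    intro k
    have hsum1 : ∑ i, xb k i = 1 := (hq.1 k).2
    trans (∑ i, (T k * (xb k i * Real.log (xb k i))
        + (T k * Real.log (∑ j, Real.exp (polyReward E A xb k j / T k))) * xb k i))
    · exact Finset.sum_congr rfl fun i _ => by rw [(hfacts k).2.2 i]; ring
    · rw [Finset.sum_add_distrib, ← Finset.mul_sum, ← Finset.mul_sum, hsum1, mul_one]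
  have hanti : Bform w E A xb y + Bform w E A y xb = 0 := Bform_antisymm hzs hq.1 hyS
  have hz_y := hzs y hyS
  have hz_xb := hzs xb hq.1
  have key : ∀ k ∈ (Finset.univ : Finset (Fin N)),
      w k * (∑ i, xb k i * (polyReward E A y k i
          - (∑ j, y k j * polyReward E A y k j)
          - T k * (Real.log (y k i) - ∑ j, y k j * Real.log (y k j))))
        - w k * T k * ((∑ i, xb k i * (Real.log (xb k i) - Real.log (y k i)))
            + (∑ i, y k i * (Real.log (y k i) - Real.log (xb k i))))
      = w k * (∑ i, xb k i * polyReward E A y k i)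
        - w k * (∑ i, y k i * polyReward E A y k i)
        - w k * (∑ i, xb k i * polyReward E A xb k i)
        + w k * (∑ i, y k i * polyReward E A xb k i) := by
    intro k _
    have e1 : ∑ i, xb k i * (Real.log (xb k i) - Real.log (y k i))
        = (∑ i, xb k i * Real.log (xb k i)) - (∑ i, xb k i * Real.log (y k i)) := by
      rw [← Finset.sum_sub_distrib]
      exact Finset.sum_congr rfl fun i _ => mul_sub _ _ _
    have e2 : ∑ i, y k i * (Real.log (y k i) - Real.log (xb k i))
        = (∑ i, y k i * Real.log (y k i)) - (∑ i, y k i * Real.log (xb k i)) := by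
      rw [← Finset.sum_sub_distrib]
      exact Finset.sum_congr rfl fun i _ => mul_sub _ _ _
    rw [claim1 k, e1, e2, claim2 k, claim3 k]
    ring
  have hsumkey := Finset.sum_congr rfl key
  rw [Finset.sum_sub_distrib] at hsumkey
  rw [Finset.sum_add_distrib, Finset.sum_sub_distrib, Finset.sum_sub_distrib] at hsumkey
  have hanti' : (∑ k, w k * ∑ i, xb k i * polyReward E A y k i)
      + (∑ k, w k * ∑ i, y k i * polyReward E A xb k i) = 0 := hanti
  linarith [hsumkey, hanti', hz_y, hz_xb]

lemma sum_mul_qre_reward {E : Finset (Fin N × Fin N)}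
    {A : ∀ k l, Matrix (Fin (n k)) (Fin (n l)) ℝ} {T : Fin N → ℝ}
    (hn : ∀ k, 0 < n k) (hT : ∀ k, 0 < T k)
    {xb : Strat n} (hq : IsQRE (polyReward E A) T xb)
    {z : Strat n} (k : Fin N) (hz : ∑ i, z k i = 1) :
    ∑ i, z k i * polyReward E A xb k i
      = T k * (∑ i, z k i * Real.log (xb k i))
        + T k * Real.log (∑ j, Real.exp (polyReward E A xb k j / T k)) := by
  trans (∑ i, (T k * (z k i * Real.log (xb k i))
      + (T k * Real.log (∑ j, Real.exp (polyReward E A xb k j / T k))) * z k i))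
  · exact Finset.sum_congr rfl fun i _ => by rw [(qre_facts hn hT hq k).2.2 i]; ring
  · rw [Finset.sum_add_distrib, ← Finset.mul_sum, ← Finset.mul_sum, hz, mul_one]

lemma qre_interior {E : Finset (Fin N × Fin N)}
    {A : ∀ k l, Matrix (Fin (n k)) (Fin (n l)) ℝ} {T : Fin N → ℝ}
    (hn : ∀ k, 0 < n k) (hT : ∀ k, 0 < T k)
    {xb : Strat n} (hq : IsQRE (polyReward E A) T xb) : JointInterior xb :=
  fun k => ⟨(qre_facts hn hT hq k).1, (qre_facts hn hT hq k).2.1⟩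

lemma qre_unique {E : Finset (Fin N × Fin N)}
    {A : ∀ k l, Matrix (Fin (n k)) (Fin (n l)) ℝ} {w T : Fin N → ℝ}
    (hn : ∀ k, 0 < n k) (hw : ∀ k, 0 < w k) (hT : ∀ k, 0 < T k)
    (hzs : ∀ x : Strat n, JointSimplex x →
      ∑ k, w k * ∑ i, x k i * polyReward E A x k i = 0)
    {x y : Strat n} (hqx : IsQRE (polyReward E A) T x)
    (hqy : IsQRE (polyReward E A) T y) : x = y := by
  have hyI : JointInterior y := qre_interior hn hT hqy
  have hxI : JointInterior x := qre_interior hn hT hqx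
  have hid := lyap_identity hn hT hzs hqx hyI
  have hG : ∀ k i, polyReward E A y k i - (∑ j, y k j * polyReward E A y k j)
      - T k * (Real.log (y k i) - ∑ j, y k j * Real.log (y k j)) = 0 := by
    intro k i
    have h1 := (qre_facts hn hT hqy k).2.2 i
    have h2 := sum_mul_qre_reward hn hT hqy (z := y) k (hqy.1 k).2
    rw [h1, h2]
    ring
  have hL : ∑ k, w k * ∑ i, x k i * (polyReward E A y k i
      - (∑ j, y k j * polyReward E A y k j)
      - T k * (Real.log (y k i) - ∑ j, y k j * Real.log (y k j))) = 0 := by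
    refine Finset.sum_eq_zero fun k _ => ?_
    rw [Finset.sum_eq_zero fun i _ => by rw [hG k i]; ring]
    ring
  rw [hL] at hid
  have hnn : ∀ k ∈ (Finset.univ : Finset (Fin N)),
      0 ≤ w k * T k * ((∑ i, x k i * (Real.log (x k i) - Real.log (y k i)))
        + (∑ i, y k i * (Real.log (y k i) - Real.log (x k i)))) := by
    intro k _
    have h1 := QLAux.kl_nonneg (p := x k) (q := y k)
      (fun i => ((hxI k).1 i).le) (fun i => (hyI k).1 i) (hxI k).2 (hyI k).2
    have h2 := QLAux.kl_nonneg (p := y k) (q := x k)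
      (fun i => ((hyI k).1 i).le) (fun i => (hxI k).1 i) (hyI k).2 (hxI k).2
    have := mul_pos (hw k) (hT k)
    positivity
  have hz0 := (Finset.sum_eq_zero_iff_of_nonneg hnn).mp hid.symm
  funext k
  have hk := hz0 k (Finset.mem_univ k)
  have h1 := QLAux.kl_nonneg (p := x k) (q := y k)
    (fun i => ((hxI k).1 i).le) (fun i => (hyI k).1 i) (hxI k).2 (hyI k).2
  have h2 := QLAux.kl_nonneg (p := y k) (q := x k)
    (fun i => ((hyI k).1 i).le) (fun i => (hxI k).1 i) (hyI k).2 (hxI k).2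
  have hwT : 0 < w k * T k := mul_pos (hw k) (hT k)
  have hkl0 : ∑ i, x k i * (Real.log (x k i) - Real.log (y k i)) = 0 := by
    rcases mul_eq_zero.mp hk with h | h
    · exact absurd h hwT.ne'
    · linarith
  exact QLAux.kl_eq_zero (fun i => ((hxI k).1 i).le) (fun i => (hyI k).1 i)
    (hxI k).2 (hyI k).2 hkl0

variable {E : Finset (Fin N × Fin N)} {A : ∀ k l, Matrix (Fin (n k)) (Fin (n l)) ℝ}
variable {w T : Fin N → ℝ}

/-- Softmax denominator. -/
def Sden (E : Finset (Fin N × Fin N)) (A : ∀ k l, Matrix (Fin (n k)) (Fin (n l)) ℝ)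
    (T : Fin N → ℝ) (y : Strat n) (k : Fin N) : ℝ :=
  ∑ j, Real.exp (polyReward E A y k j / T k)

/-- Softmax (logit) response map. -/
def smax (E : Finset (Fin N × Fin N)) (A : ∀ k l, Matrix (Fin (n k)) (Fin (n l)) ℝ)
    (T : Fin N → ℝ) (y : Strat n) : Strat n :=
  fun k i => Real.exp (polyReward E A y k i / T k) / Sden E A T y k

/-- Weighted entropy-type functional. -/
def entw (w T : Fin N → ℝ) (x : Strat n) : ℝ :=
  ∑ k, w k * (T k * ∑ i, x k i * Real.log (x k i))

def gfun (E : Finset (Fin N × Fin N)) (A : ∀ k l, Matrix (Fin (n k)) (Fin (n l)) ℝ)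
    (w T : Fin N → ℝ) (y : Strat n) : ℝ :=
  (∑ k, w k * (T k * Real.log (Sden E A T y k))) + entw w T y

def Phi (E : Finset (Fin N × Fin N)) (A : ∀ k l, Matrix (Fin (n k)) (Fin (n l)) ℝ)
    (w T : Fin N → ℝ) (x y : Strat n) : ℝ :=
  Bform w E A x y - entw w T x + entw w T y

lemma Sden_pos (hn : ∀ k, 0 < n k) (y : Strat n) (k : Fin N) : 0 < Sden E A T y k :=
  Finset.sum_pos (fun j _ => Real.exp_pos _) ⟨⟨0, hn k⟩, Finset.mem_univ _⟩

lemma smax_simplex (hn : ∀ k, 0 < n k) (y : Strat n) : JointSimplex (smax E A T y) := by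
  intro k
  constructor
  · intro i
    have h := Sden_pos (E := E) (A := A) (T := T) hn y k
    have : 0 < Real.exp (polyReward E A y k i / T k) := Real.exp_pos _
    exact (div_pos this h).le
  · exact QLAux2.softmax_sum (fun j => polyReward E A y k j) (T k) (hn k)

lemma continuous_Sden (k : Fin N) : Continuous fun y : Strat n => Sden E A T y k :=
  continuous_finset_sum _ fun j _ =>
    Real.continuous_exp.comp ((continuous_polyReward E A k j).div_const (T k))

lemma continuous_smax (hn : ∀ k, 0 < n k) : Continuous (smax E A T (n := n)) :=
  continuous_pi fun k => continuous_pi fun i =>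
    (Real.continuous_exp.comp ((continuous_polyReward E A k i).div_const (T k))).div
      (continuous_Sden k) (fun y => (Sden_pos hn y k).ne')

lemma continuous_entw : Continuous (entw w T (n := n)) :=
  continuous_finset_sum _ fun k _ => continuous_const.mul <| continuous_const.mul <|
    continuous_finset_sum _ fun i _ =>
      Real.continuous_mul_log.comp ((continuous_apply i).comp (continuous_apply k))

lemma continuous_gfun (hn : ∀ k, 0 < n k) : Continuous (gfun E A w T (n := n)) := by
  refine Continuous.add (continuous_finset_sum _ fun k _ =>
    continuous_const.mul (continuous_const.mul ?_)) continuous_entw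
  exact Continuous.log (continuous_Sden k) (fun y => (Sden_pos hn y k).ne')

lemma continuous_Phi_left (y : Strat n) : Continuous fun x : Strat n => Phi E A w T x y := by
  unfold Phi Bform
  refine Continuous.add (Continuous.sub (continuous_finset_sum _ fun k _ =>
    continuous_const.mul (continuous_finset_sum _ fun i _ =>
      ((continuous_apply i).comp (continuous_apply k)).fun_mul continuous_const))
    continuous_entw) continuous_const

lemma Phi_le_g (hn : ∀ k, 0 < n k) (hw : ∀ k, 0 < w k) (hT : ∀ k, 0 < T k)
    {x : Strat n} (hx : JointSimplex x) (y : Strat n) :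
    Phi E A w T x y ≤ gfun E A w T y := by
  have hk : ∀ k ∈ (Finset.univ : Finset (Fin N)),
      w k * ((∑ i, x k i * polyReward E A y k i)
          - T k * (∑ i, x k i * Real.log (x k i)))
        ≤ w k * (T k * Real.log (Sden E A T y k)) := by
    intro k _
    refine mul_le_mul_of_nonneg_left ?_ (hw k).le
    exact QLAux2.gibbs_le (fun i => polyReward E A y k i) (T k) (hT k) (hn k)
      (hx k).1 (hx k).2
  have hsum := Finset.sum_le_sum hk
  have hL : ∑ k, w k * ((∑ i, x k i * polyReward E A y k i)
        - T k * (∑ i, x k i * Real.log (x k i)))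
      = (∑ k, w k * ∑ i, x k i * polyReward E A y k i)
        - ∑ k, w k * (T k * ∑ i, x k i * Real.log (x k i)) := by
    rw [← Finset.sum_sub_distrib]
    exact Finset.sum_congr rfl fun k _ => by ring
  rw [hL] at hsum
  unfold Phi gfun Bform entw
  linarith [hsum]

lemma Phi_eq_g_imp (hn : ∀ k, 0 < n k) (hw : ∀ k, 0 < w k) (hT : ∀ k, 0 < T k)
    {x : Strat n} (hx : JointSimplex x) {y : Strat n}
    (heq : Phi E A w T x y = gfun E A w T y) : x = smax E A T y := by
  have hk : ∀ k ∈ (Finset.univ : Finset (Fin N)),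
      (0:ℝ) ≤ w k * (T k * Real.log (Sden E A T y k))
        - w k * ((∑ i, x k i * polyReward E A y k i)
            - T k * (∑ i, x k i * Real.log (x k i))) := by
    intro k _
    have h : w k * ((∑ i, x k i * polyReward E A y k i)
        - T k * (∑ i, x k i * Real.log (x k i)))
        ≤ w k * (T k * Real.log (Sden E A T y k)) :=
      mul_le_mul_of_nonneg_left
        (QLAux2.gibbs_le (fun i => polyReward E A y k i) (T k) (hT k) (hn k)
          (hx k).1 (hx k).2) (hw k).le
    linarith [h]
  have hsum0 : ∑ k, (w k * (T k * Real.log (Sden E A T y k))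
      - w k * ((∑ i, x k i * polyReward E A y k i)
          - T k * (∑ i, x k i * Real.log (x k i)))) = 0 := by
    rw [Finset.sum_sub_distrib]
    have hL : ∑ k, w k * ((∑ i, x k i * polyReward E A y k i)
          - T k * (∑ i, x k i * Real.log (x k i)))
        = (∑ k, w k * ∑ i, x k i * polyReward E A y k i)
          - ∑ k, w k * (T k * ∑ i, x k i * Real.log (x k i)) := by
      rw [← Finset.sum_sub_distrib]
      exact Finset.sum_congr rfl fun k _ => by ring
    rw [hL]
    unfold Phi gfun Bform entw at heq
    linarith [heq]
  have hall := (Finset.sum_eq_zero_iff_of_nonneg hk).mp hsum0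
  funext k
  have hkk := hall k (Finset.mem_univ k)
  have heqk : (∑ i, x k i * polyReward E A y k i)
      - T k * ∑ i, x k i * Real.log (x k i)
      = T k * Real.log (Sden E A T y k) := by
    have h3 : w k * ((T k * Real.log (Sden E A T y k))
        - ((∑ i, x k i * polyReward E A y k i)
          - T k * (∑ i, x k i * Real.log (x k i)))) = 0 := by linarith [hkk]
    have h4 := (mul_eq_zero.mp h3).resolve_left (hw k).ne'
    linarith [h4]
  exact QLAux2.gibbs_eq_case (fun i => polyReward E A y k i) (T k) (hT k) (hn k)
    (hx k).1 (hx k).2 heqk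

lemma Phi_smax_eq (hn : ∀ k, 0 < n k) (hT : ∀ k, 0 < T k) (y : Strat n) :
    Phi E A w T (smax E A T y) y = gfun E A w T y := by
  have hk : ∀ k ∈ (Finset.univ : Finset (Fin N)),
      w k * ((∑ i, smax E A T y k i * polyReward E A y k i)
          - T k * (∑ i, smax E A T y k i * Real.log (smax E A T y k i)))
        = w k * (T k * Real.log (Sden E A T y k)) := by
    intro k _
    congr 1
    exact QLAux2.gibbs_attain (fun i => polyReward E A y k i) (T k) (hT k) (hn k)
  have hsum := Finset.sum_congr rfl hk
  have hL : ∑ k, w k * ((∑ i, smax E A T y k i * polyReward E A y k i)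
        - T k * (∑ i, smax E A T y k i * Real.log (smax E A T y k i)))
      = (∑ k, w k * ∑ i, smax E A T y k i * polyReward E A y k i)
        - ∑ k, w k * (T k * ∑ i, smax E A T y k i * Real.log (smax E A T y k i)) := by
    rw [← Finset.sum_sub_distrib]
    exact Finset.sum_congr rfl fun k _ => by ring
  rw [hL] at hsum
  unfold Phi gfun Bform entw
  linarith [hsum]

lemma Phi_antisym
    (hzs : ∀ x : Strat n, JointSimplex x →
      ∑ k, w k * ∑ i, x k i * polyReward E A x k i = 0)
    {x y : Strat n} (hx : JointSimplex x) (hy : JointSimplex y) :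
    Phi E A w T x y = -Phi E A w T y x := by
  have h := Bform_antisymm hzs hx hy
  unfold Phi
  linarith [h]

lemma Phi_self
    (hzs : ∀ x : Strat n, JointSimplex x →
      ∑ k, w k * ∑ i, x k i * polyReward E A x k i = 0)
    {x : Strat n} (hx : JointSimplex x) : Phi E A w T x x = 0 := by
  have h : Bform w E A x x = 0 := hzs x hx
  unfold Phi
  rw [h]
  ring

lemma Bform_comb_right (x y0 y1 : Strat n) (a b : ℝ) :
    Bform w E A x (fun l j => a * y0 l j + b * y1 l j)
      = a * Bform w E A x y0 + b * Bform w E A x y1 := by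
  unfold Bform
  rw [Finset.mul_sum, Finset.mul_sum, ← Finset.sum_add_distrib]
  refine Finset.sum_congr rfl fun k _ => ?_
  rw [show ∑ i, x k i * polyReward E A (fun l j => a * y0 l j + b * y1 l j) k i
      = ∑ i, (a * (x k i * polyReward E A y0 k i)
          + b * (x k i * polyReward E A y1 k i)) from
    Finset.sum_congr rfl fun i _ => by rw [polyReward_comb]; ring]
  rw [Finset.sum_add_distrib, ← Finset.mul_sum, ← Finset.mul_sum]
  ring

lemma entw_segment (hw : ∀ k, 0 < w k) (hT : ∀ k, 0 < T k) {y0 y1 : Strat n}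
    (h0 : ∀ k i, 0 ≤ y0 k i) (h1 : ∀ k i, 0 ≤ y1 k i) {t : ℝ}
    (ht0 : 0 ≤ t) (ht1 : t ≤ 1) :
    entw w T (fun k i => (1-t) * y0 k i + t * y1 k i)
      ≤ (1-t) * entw w T y0 + t * entw w T y1 := by
  unfold entw
  rw [Finset.mul_sum, Finset.mul_sum, ← Finset.sum_add_distrib]
  refine Finset.sum_le_sum fun k _ => ?_
  rw [show (1-t) * (w k * (T k * ∑ i, y0 k i * Real.log (y0 k i)))
      + t * (w k * (T k * ∑ i, y1 k i * Real.log (y1 k i)))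
      = w k * (T k * ((1-t) * (∑ i, y0 k i * Real.log (y0 k i))
        + t * (∑ i, y1 k i * Real.log (y1 k i)))) from by ring]
  refine mul_le_mul_of_nonneg_left (mul_le_mul_of_nonneg_left ?_ (hT k).le) (hw k).le
  rw [Finset.mul_sum, Finset.mul_sum, ← Finset.sum_add_distrib]
  refine Finset.sum_le_sum fun i _ => ?_
  exact QLAux.mul_log_segment (h0 k i) (h1 k i) ht0 ht1

lemma Phi_segment (hw : ∀ k, 0 < w k) (hT : ∀ k, 0 < T k) (x : Strat n) {y0 y1 : Strat n}
    (h0 : ∀ k i, 0 ≤ y0 k i) (h1 : ∀ k i, 0 ≤ y1 k i) {t : ℝ}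
    (ht0 : 0 ≤ t) (ht1 : t ≤ 1) :
    Phi E A w T x (fun k i => (1-t) * y0 k i + t * y1 k i)
      ≤ (1-t) * Phi E A w T x y0 + t * Phi E A w T x y1 := by
  have hB := Bform_comb_right (w := w) (E := E) (A := A) x y0 y1 (1-t) t
  have hE := entw_segment (w := w) (T := T) hw hT h0 h1 ht0 ht1
  unfold Phi
  rw [hB]
  linarith [hE]

lemma jointSimplex_segment {y0 y1 : Strat n} (h0 : JointSimplex y0) (h1 : JointSimplex y1)
    {t : ℝ} (ht0 : 0 ≤ t) (ht1 : t ≤ 1) :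
    JointSimplex (fun k i => (1-t) * y0 k i + t * y1 k i) := by
  intro k
  constructor
  · intro i
    have a1 := mul_nonneg (by linarith : (0:ℝ) ≤ 1 - t) ((h0 k).1 i)
    have a2 := mul_nonneg ht0 ((h1 k).1 i)
    exact add_nonneg a1 a2
  · rw [Finset.sum_add_distrib, ← Finset.mul_sum, ← Finset.mul_sum, (h0 k).2, (h1 k).2]
    ring

lemma qre_exists (hn : ∀ k, 0 < n k) (hw : ∀ k, 0 < w k) (hT : ∀ k, 0 < T k)
    (hzs : ∀ x : Strat n, JointSimplex x →
      ∑ k, w k * ∑ i, x k i * polyReward E A x k i = 0) :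
    ∃ xb : Strat n, IsQRE (polyReward E A) T xb := by
  classical
  set Δ : Set (Strat n) := Set.univ.pi (fun k => stdSimplex ℝ (Fin (n k))) with hΔdef
  have hmem : ∀ x : Strat n, x ∈ Δ ↔ JointSimplex x := by
    intro x
    constructor
    · intro h k; exact h k (Set.mem_univ k)
    · intro h k _; exact h k
  have hΔc : IsCompact Δ := isCompact_univ_pi fun k => isCompact_stdSimplex _ _
  have hΔne : Δ.Nonempty := by
    refine ⟨fun k i => (n k : ℝ)⁻¹, (hmem _).mpr fun k => ⟨fun i => by positivity, ?_⟩⟩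
    rw [Finset.sum_const, Finset.card_univ, Fintype.card_fin, nsmul_eq_mul]
    exact mul_inv_cancel₀ (Nat.cast_ne_zero.mpr (hn k).ne')
  obtain ⟨ys, hysΔ, hysmin⟩ := hΔc.exists_isMinOn hΔne (continuous_gfun (E := E) (A := A) (w := w) (T := T) hn).continuousOn
  have hysS : JointSimplex ys := (hmem ys).mp hysΔ
  set xs : Strat n := smax E A T ys with hxsdef
  have hxsS : JointSimplex xs := smax_simplex hn ys
  have hA : 0 ≤ gfun E A w T ys := by
    have h := Phi_le_g (E := E) (A := A) hn hw hT hysS ys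
    rw [Phi_self hzs hysS] at h
    exact h
  have key : ∀ y : Strat n, JointSimplex y → gfun E A w T ys ≤ Phi E A w T xs y := by
    intro y hy
    set F : ℝ → ℝ := fun t =>
      Phi E A w T (smax E A T (fun k i => (1-t) * ys k i + t * y k i)) y with hF
    have hbound : ∀ t ∈ Set.Ioc (0:ℝ) 1, gfun E A w T ys ≤ F t := by
      intro t ht
      set yt : Strat n := fun k i => (1-t) * ys k i + t * y k i with hyt
      have hytS : JointSimplex yt := jointSimplex_segment hysS hy ht.1.le ht.2
      have h1 : gfun E A w T ys ≤ gfun E A w T yt :=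
        isMinOn_iff.mp hysmin yt ((hmem yt).mpr hytS)
      have h2 : Phi E A w T (smax E A T yt) yt = gfun E A w T yt := Phi_smax_eq hn hT yt
      have h3 : Phi E A w T (smax E A T yt) yt
          ≤ (1-t) * Phi E A w T (smax E A T yt) ys
            + t * Phi E A w T (smax E A T yt) y :=
        Phi_segment hw hT _ (fun k i => (hysS k).1 i) (fun k i => (hy k).1 i) ht.1.le ht.2
      have h4 : Phi E A w T (smax E A T yt) ys ≤ gfun E A w T ys :=
        Phi_le_g hn hw hT (smax_simplex hn yt) ys
      have h6 : (1-t) * Phi E A w T (smax E A T yt) ys ≤ (1-t) * gfun E A w T ys :=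
        mul_le_mul_of_nonneg_left h4 (by linarith [ht.2])
      have hFt : F t = Phi E A w T (smax E A T yt) y := rfl
      have h5 : t * gfun E A w T ys ≤ t * F t := by
        rw [hFt]
        linarith [h1, h2, h3, h6]
      exact (mul_le_mul_iff_right₀ ht.1).mp h5
    have hc1 : Continuous fun t : ℝ => (fun k i => (1-t) * ys k i + t * y k i : Strat n) :=
      continuous_pi fun k => continuous_pi fun i => by continuity
    have hFcont : Continuous F := (continuous_Phi_left y).comp ((continuous_smax hn).comp hc1)
    have hten : Tendsto F (𝓝[>] (0:ℝ)) (𝓝 (F 0)) :=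
      (hFcont.tendsto 0).mono_left nhdsWithin_le_nhds
    have hev : ∀ᶠ t in 𝓝[>] (0:ℝ), gfun E A w T ys ≤ F t := by
      filter_upwards [Ioc_mem_nhdsGT_of_mem (Set.mem_Ico.mpr ⟨le_refl (0:ℝ), zero_lt_one⟩)]
        with t ht
      exact hbound t ht
    have hle := ge_of_tendsto hten hev
    have hF0 : F 0 = Phi E A w T xs y := by
      have hys0 : (fun k i => (1-(0:ℝ)) * ys k i + (0:ℝ) * y k i : Strat n) = ys := by
        funext k i; ring
      simp only [hF, hys0, hxsdef]
    rw [hF0] at hle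
    exact hle
  have hg0 : gfun E A w T ys = 0 := by
    have h1 := key xs hxsS
    rw [Phi_self hzs hxsS] at h1
    linarith [hA, h1]
  have hD : ∀ y : Strat n, JointSimplex y → Phi E A w T y xs ≤ 0 := by
    intro y hy
    have h1 := key y hy
    rw [hg0] at h1
    have ha := Phi_antisym (T := T) hzs hy hxsS
    linarith [h1, ha]
  have hgxs0 : gfun E A w T xs = 0 := by
    have h1 : gfun E A w T xs ≤ 0 := by
      have h := hD (smax E A T xs) (smax_simplex hn xs)
      rw [Phi_smax_eq hn hT xs] at h
      exact h
    have h2 : 0 ≤ gfun E A w T xs := by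
      have h := Phi_le_g (E := E) (A := A) hn hw hT hxsS xs
      rw [Phi_self hzs hxsS] at h
      exact h
    linarith
  have hfix : xs = smax E A T xs := by
    refine Phi_eq_g_imp hn hw hT hxsS ?_
    rw [Phi_self hzs hxsS, hgxs0]
  refine ⟨xs, hxsS, fun k i => ?_⟩
  conv_lhs => rw [hfix]
  rfl

end QLGame


theorem Q_learning_converges_in_weighted_zero_sum_polymatrix_games
    {N : ℕ} {n : Fin N → ℕ} (hn : ∀ k, 0 < n k)
    (E : Finset (Fin N × Fin N))
    (A : ∀ k l, Matrix (Fin (n k)) (Fin (n l)) ℝ)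
    -- the game is weighted zero-sum: Σ_k w_k u_k(x) = 0 on Δ
    (w : Fin N → ℝ) (hw : ∀ k, 0 < w k)
    (hzs : ∀ x : Strat n, JointSimplex x →
      ∑ k, w k * ∑ i, x k i * polyReward E A x k i = 0)
    (T : Fin N → ℝ) (hT : ∀ k, 0 < T k) :
    ∃ xbar : Strat n, IsQRE (polyReward E A) T xbar ∧
      (∀ y, IsQRE (polyReward E A) T y → y = xbar) ∧
      ∀ x : ℝ → Strat n, QLSolution (polyReward E A) T x →
        Tendsto x atTop (𝓝 xbar) := by
  rcases Nat.eq_zero_or_pos N with hN | hN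
  · subst hN
    refine ⟨fun k => k.elim0, ⟨fun k => k.elim0, fun k => k.elim0⟩,
      fun y _ => funext fun k => k.elim0, fun x _ => ?_⟩
    have hx0 : x = fun _ => (fun k => k.elim0) := funext fun t => funext fun k => k.elim0
    rw [hx0]
    exact tendsto_const_nhds
  -- main case
  obtain ⟨xb, hq⟩ := QLGame.qre_exists (E := E) (A := A) hn hw hT hzs
  refine ⟨xb, hq, fun y hy => QLGame.qre_unique hn hw hT hzs hy hq, ?_⟩
  intro x hx
  have hxbI : JointInterior xb := QLGame.qre_interior hn hT hq
  -- the temperature floor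
  have hNe : Nonempty (Fin N) := ⟨⟨0, hN⟩⟩
  set c : ℝ := Finset.univ.inf' Finset.univ_nonempty T with hc
  have hc_pos : 0 < c := by
    rw [hc, Finset.lt_inf'_iff]
    exact fun k _ => hT k
  have hcle : ∀ k, c ≤ T k := fun k => Finset.inf'_le _ (Finset.mem_univ k)
  -- the Lyapunov function
  set Vfun : Strat n → ℝ :=
    fun y => ∑ k, w k * ∑ i, xb k i * (Real.log (xb k i) - Real.log (y k i)) with hVfun
  set V : ℝ → ℝ := fun t => Vfun (x t) with hVdef
  have hVnonneg : ∀ t, 0 ≤ V t := by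
    intro t
    refine Finset.sum_nonneg fun k _ => mul_nonneg (hw k).le ?_
    exact QLAux.kl_nonneg (hq.1 k).1 (hx.1 t k).1 (hq.1 k).2 (hx.1 t k).2
  -- the derivative of V
  have hlog : ∀ t k i, HasDerivAt (fun s => Real.log (x s k i))
      (polyReward E A (x t) k i - (∑ j, x t k j * polyReward E A (x t) k j)
        - T k * (Real.log (x t k i) - ∑ j, x t k j * Real.log (x t k j))) t := by
    intro t k i
    have hpos := (hx.1 t k).1 i
    have h0 := (hx.2 t k i).log hpos.ne'
    rwa [mul_div_cancel_left₀ _ hpos.ne'] at h0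
  have hV' : ∀ t, HasDerivAt V
      (-(∑ k, w k * T k *
          ((∑ i, xb k i * (Real.log (xb k i) - Real.log (x t k i)))
            + (∑ i, x t k i * (Real.log (x t k i) - Real.log (xb k i)))))) t := by
    intro t
    have h1 : HasDerivAt V
        (∑ k, w k * ∑ i, xb k i *
          -(polyReward E A (x t) k i - (∑ j, x t k j * polyReward E A (x t) k j)
            - T k * (Real.log (x t k i) - ∑ j, x t k j * Real.log (x t k j)))) t := by
      exact HasDerivAt.fun_sum fun k _ =>
        (HasDerivAt.fun_sum fun i _ =>
          ((hlog t k i).const_sub (Real.log (xb k i))).const_mul (xb k i)).const_mul (w k)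
    have h2 : (∑ k, w k * ∑ i, xb k i *
          -(polyReward E A (x t) k i - (∑ j, x t k j * polyReward E A (x t) k j)
            - T k * (Real.log (x t k i) - ∑ j, x t k j * Real.log (x t k j))))
        = -(∑ k, w k * T k *
          ((∑ i, xb k i * (Real.log (xb k i) - Real.log (x t k i)))
            + (∑ i, x t k i * (Real.log (x t k i) - Real.log (xb k i))))) := by
      have hid := QLGame.lyap_identity hn hT hzs hq (hx.1 t)
      rw [← hid, ← Finset.sum_neg_distrib]
      refine Finset.sum_congr rfl fun k _ => ?_
      rw [show ∑ i, xb k i *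
            -(polyReward E A (x t) k i - (∑ j, x t k j * polyReward E A (x t) k j)
              - T k * (Real.log (x t k i) - ∑ j, x t k j * Real.log (x t k j)))
          = -(∑ i, xb k i *
            (polyReward E A (x t) k i - (∑ j, x t k j * polyReward E A (x t) k j)
              - T k * (Real.log (x t k i) - ∑ j, x t k j * Real.log (x t k j)))) from by
        rw [← Finset.sum_neg_distrib]
        exact Finset.sum_congr rfl fun i _ => mul_neg _ _]
      ring
    rw [h2] at h1
    exact h1
  -- the decay bound
  have hRt : ∀ t, c * V t ≤ ∑ k, w k * T k *
      ((∑ i, xb k i * (Real.log (xb k i) - Real.log (x t k i)))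
        + (∑ i, x t k i * (Real.log (x t k i) - Real.log (xb k i)))) := by
    intro t
    have hVt : c * V t = ∑ k, c * (w k * ∑ i, xb k i * (Real.log (xb k i) - Real.log (x t k i))) := by
      simp only [hVdef, hVfun]
      rw [Finset.mul_sum]
    rw [hVt]
    refine Finset.sum_le_sum fun k _ => ?_
    have hKLa : 0 ≤ ∑ i, xb k i * (Real.log (xb k i) - Real.log (x t k i)) :=
      QLAux.kl_nonneg (hq.1 k).1 (hx.1 t k).1 (hq.1 k).2 (hx.1 t k).2
    have hKLb : 0 ≤ ∑ i, x t k i * (Real.log (x t k i) - Real.log (xb k i)) :=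
      QLAux.kl_nonneg (fun i => ((hx.1 t k).1 i).le) (fun i => (hxbI k).1 i)
        (hx.1 t k).2 (hxbI k).2
    nlinarith [mul_le_mul_of_nonneg_right (hcle k) hKLa, (hw k).le, hT k,
      mul_nonneg (hT k).le hKLb, (hw k), hKLa]
  -- exponential decay
  have hexpd : ∀ t : ℝ, HasDerivAt (fun s => Real.exp (c * s)) (Real.exp (c * t) * c) t := by
    intro t
    simpa using ((hasDerivAt_id t).const_mul c).exp
  have hfanti : Antitone (fun t => V t * Real.exp (c * t)) := by
    refine antitone_of_deriv_nonpos
      (fun t => ((hV' t).mul (hexpd t)).differentiableAt) (fun t => ?_)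
    rw [((hV' t).fun_mul (hexpd t)).deriv]
    nlinarith [mul_le_mul_of_nonneg_right (hRt t) (Real.exp_pos (c * t)).le]
  have hupper : ∀ t, 0 ≤ t → V t ≤ V 0 * Real.exp (-(c * t)) := by
    intro t ht0
    have h1 := hfanti ht0
    simp only [mul_zero, Real.exp_zero, mul_one] at h1
    calc V t = V t * Real.exp (c * t) * Real.exp (-(c * t)) := by
          rw [mul_assoc, ← Real.exp_add]; simp
      _ ≤ V 0 * Real.exp (-(c * t)) :=
          mul_le_mul_of_nonneg_right h1 (Real.exp_pos _).le
  have hVtend : Tendsto V atTop (𝓝 0) := by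
    have h1 : Tendsto (fun t : ℝ => c * t) atTop atTop :=
      Tendsto.const_mul_atTop hc_pos tendsto_id
    have h2 : Tendsto (fun t : ℝ => -(c * t)) atTop atBot := tendsto_neg_atBot_iff.mpr h1
    have h3 : Tendsto (fun t : ℝ => Real.exp (-(c * t))) atTop (𝓝 0) :=
      Real.tendsto_exp_atBot.comp h2
    have h4 : Tendsto (fun t : ℝ => V 0 * Real.exp (-(c * t))) atTop (𝓝 0) := by
      simpa using h3.const_mul (V 0)
    refine tendsto_of_tendsto_of_tendsto_of_le_of_le' tendsto_const_nhds h4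
      (Eventually.of_forall hVnonneg) ?_
    exact eventually_atTop.mpr ⟨0, hupper⟩
  -- conclude convergence by compactness
  by_contra hcon
  rw [Metric.tendsto_atTop] at hcon
  push_neg at hcon
  obtain ⟨ε, hε, hfar⟩ := hcon
  choose u hu1 hu2 using fun m : ℕ => hfar m
  set Δ : Set (Strat n) := Set.univ.pi (fun k => stdSimplex ℝ (Fin (n k))) with hΔdef
  have hΔc : IsCompact Δ := isCompact_univ_pi fun k => isCompact_stdSimplex _ _
  have hmemu : ∀ m : ℕ, x (u m) ∈ Δ := by
    intro m k _
    exact ⟨fun i => ((hx.1 (u m) k).1 i).le, (hx.1 (u m) k).2⟩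
  obtain ⟨z, hzΔ, φ, hφmono, hφtend⟩ := hΔc.tendsto_subseq hmemu
  have hzS : ∀ k, (∀ i, 0 ≤ z k i) ∧ ∑ i, z k i = 1 := fun k => hzΔ k (Set.mem_univ k)
  have huφ : Tendsto (fun m => u (φ m)) atTop atTop := by
    refine tendsto_atTop_mono (fun m => ?_) tendsto_natCast_atTop_atTop
    exact le_trans (Nat.cast_le.mpr (hφmono.le_apply)) (hu1 (φ m))
  have hVseq : Tendsto (fun m => Vfun (x (u (φ m)))) atTop (𝓝 0) := hVtend.comp huφ
  have hxcoord : ∀ k i, Tendsto (fun m => x (u (φ m)) k i) atTop (𝓝 (z k i)) := by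
    intro k i
    have h1 := hφtend
    rw [tendsto_pi_nhds] at h1
    have h2 := h1 k
    rw [tendsto_pi_nhds] at h2
    exact h2 i
  by_cases hzpos : ∀ k i, 0 < z k i
  · -- interior limit: V continuous there, so V z = 0, so z = xb, contradiction
    have hVlim : Tendsto (fun m => Vfun (x (u (φ m)))) atTop (𝓝 (Vfun z)) := by
      simp only [hVfun]
      refine tendsto_finset_sum _ fun k _ => Tendsto.const_mul _ ?_
      refine tendsto_finset_sum _ fun i _ => Tendsto.const_mul _ ?_
      exact Tendsto.const_sub _
        (((Real.continuousAt_log (hzpos k i).ne').tendsto).comp (hxcoord k i))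
    have hV0 : Vfun z = 0 := tendsto_nhds_unique hVlim hVseq
    have hzeq : xb = z := by
      have hnn : ∀ k ∈ (Finset.univ : Finset (Fin N)),
          (0:ℝ) ≤ w k * ∑ i, xb k i * (Real.log (xb k i) - Real.log (z k i)) := by
        intro k _
        exact mul_nonneg (hw k).le
          (QLAux.kl_nonneg (hq.1 k).1 (fun i => hzpos k i) (hq.1 k).2 (hzS k).2)
      have hall := (Finset.sum_eq_zero_iff_of_nonneg hnn).mp hV0
      funext k
      have hk := hall k (Finset.mem_univ k)
      have hkl : ∑ i, xb k i * (Real.log (xb k i) - Real.log (z k i)) = 0 :=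
        (mul_eq_zero.mp hk).resolve_left (hw k).ne'
      exact QLAux.kl_eq_zero (hq.1 k).1 (fun i => hzpos k i) (hq.1 k).2 (hzS k).2 hkl
    have hdist : Tendsto (fun m => dist (x (u (φ m))) xb) atTop (𝓝 (dist z xb)) :=
      hφtend.dist tendsto_const_nhds
    have hdge : ε ≤ dist z xb :=
      ge_of_tendsto hdist (Eventually.of_forall fun m => hu2 (φ m))
    rw [← hzeq, dist_self] at hdge
    linarith
  · -- boundary limit: V blows up, contradiction with V → 0
    push_neg at hzpos
    obtain ⟨k0, i0, hz0⟩ := hzpos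
    have hz00 : z k0 i0 = 0 := le_antisymm hz0 ((hzS k0).1 i0)
    -- lower bound for V on interior points
    have hlb : ∀ t : ℝ, (∑ k, w k * ∑ i, xb k i * Real.log (xb k i))
        + w k0 * (xb k0 i0 * -(Real.log (x t k0 i0))) ≤ Vfun (x t) := by
      intro t
      have hsplit : Vfun (x t) = (∑ k, w k * ∑ i, xb k i * Real.log (xb k i))
          + ∑ k, w k * ∑ i, xb k i * -(Real.log (x t k i)) := by
        rw [hVfun, ← Finset.sum_add_distrib]
        refine Finset.sum_congr rfl fun k _ => ?_
        rw [← mul_add, ← Finset.sum_add_distrib]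
        congr 1
        exact Finset.sum_congr rfl fun i _ => by ring
      rw [hsplit]
      have hterm : ∀ k, (0:ℝ) ≤ w k * ∑ i, xb k i * -(Real.log (x t k i)) := by
        intro k
        refine mul_nonneg (hw k).le (Finset.sum_nonneg fun i _ => ?_)
        refine mul_nonneg ((hq.1 k).1 i) ?_
        have hle1 : x t k i ≤ 1 := by
          have := Finset.single_le_sum (f := fun j => x t k j)
            (fun j _ => ((hx.1 t k).1 j).le) (Finset.mem_univ i)
          rw [(hx.1 t k).2] at this
          linarith
        have := Real.log_nonpos ((hx.1 t k).1 i).le hle1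
        linarith
      have hsingle : w k0 * (xb k0 i0 * -(Real.log (x t k0 i0)))
          ≤ ∑ k, w k * ∑ i, xb k i * -(Real.log (x t k i)) := by
        refine le_trans ?_ (Finset.single_le_sum (fun k _ => hterm k) (Finset.mem_univ k0))
        refine mul_le_mul_of_nonneg_left ?_ (hw k0).le
        refine Finset.single_le_sum (f := fun i => xb k0 i * -(Real.log (x t k0 i)))
          (fun i _ => ?_) (Finset.mem_univ i0)
        refine mul_nonneg ((hq.1 k0).1 i) ?_
        have hle1 : x t k0 i ≤ 1 := by
          have := Finset.single_le_sum (f := fun j => x t k0 j)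
            (fun j _ => ((hx.1 t k0).1 j).le) (Finset.mem_univ i)
          rw [(hx.1 t k0).2] at this
          linarith
        have := Real.log_nonpos ((hx.1 t k0).1 i).le hle1
        linarith
      linarith
    -- the coordinate tends to 0 from the right, so -log → ∞
    have hcoord0 : Tendsto (fun m => x (u (φ m)) k0 i0) atTop (𝓝[>] (0:ℝ)) := by
      refine tendsto_nhdsWithin_of_tendsto_nhds_of_eventually_within _ ?_ ?_
      · have h := hxcoord k0 i0
        rwa [hz00] at h
      · exact Eventually.of_forall fun m => Set.mem_Ioi.mpr ((hx.1 (u (φ m)) k0).1 i0)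
    have hlogbot : Tendsto (fun m => Real.log (x (u (φ m)) k0 i0)) atTop atBot :=
      Real.tendsto_log_nhdsGT_zero.comp hcoord0
    have hxbpos : 0 < w k0 * (xb k0 i0) := mul_pos (hw k0) ((hxbI k0).1 i0)
    have ha1 : Tendsto (fun m => -(Real.log (x (u (φ m)) k0 i0))) atTop atTop :=
      tendsto_neg_atTop_iff.mpr hlogbot
    have ha2 : Tendsto (fun m => xb k0 i0 * -(Real.log (x (u (φ m)) k0 i0))) atTop atTop :=
      Tendsto.const_mul_atTop ((hxbI k0).1 i0) ha1
    have ha3 : Tendsto (fun m => w k0 * (xb k0 i0 * -(Real.log (x (u (φ m)) k0 i0)))) atTop atTop :=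
      Tendsto.const_mul_atTop (hw k0) ha2
    have hblow : Tendsto (fun m => Vfun (x (u (φ m)))) atTop atTop := by
      refine tendsto_atTop_mono (fun m => hlb (u (φ m))) ?_
      exact tendsto_atTop_add_const_left _ _ ha3
    have h1 := hblow.eventually_gt_atTop (1 : ℝ)
    have h2 := hVseq.eventually (gt_mem_nhds (by norm_num : (0:ℝ) < 1))
    obtain ⟨m, hm1, hm2⟩ := (h1.and h2).exists
    linarith


end
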